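/- arXiv:2103.10061 — 2 statements merged into one kernel-verified Lean document; each statement's English description precedes it below -/
import Mathlib

section
/- Let q > 1 be a real number and n ≥ 1 an integer. For 0 ≤ l ≤ 2n, let 𝔐_l be the (l+1)×(l+1) real matrix with (i, s)-entry (-q)^{s(2n-i)} (0 ≤ i, s ≤ l), let d_{i,l} (0 ≤ i ≤ l) be the components of the unique solution of 𝔐_l d = (0, …, 0, 1)^T, let Δ be the (2n+1)×(2n+1) upper triangular matrix with Δ_{i,l} = d_{i,l} for i ≤ l, let v ∈ ℝ^{2n+1} have v_0 = 0 and v_k = (-q)^{n(2n-k) - 4n²} - (-q)^{-2n²} for 1 ≤ k ≤ 2n, and let K = (K_0, …, K_{2n}) be the unique solution of (𝔐_{2n}·Δ)·K = v. Then for every 1 ≤ i ≤ n and 0 ≤ p ≤ i, K_i · d_{p,i} = (-1)^{i-p} · (-q)^{(n+1)(i-p) + (3n-i+1)(n-i)/2 - 4n²} · (∏_{j=1}^{n-p} ((-q)^n - (-q)^{j-1})) / ( (∏_{j=1}^{i-p} ((-q)^j - 1)) · (∏_{j=1}^{n-i} ((-q)^j - 1)) ), where empty products equal 1 and the exponent (3n-i+1)(n-i)/2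 is an integer. -/
/- Closed formula for the products 𝒦_i·d_{p,i} computed in the proof of Theorem 4.7. -/

/-- The (l+1)×(l+1) matrix 𝔐_l with (i,s)-entry (-q)^{s(2n-i)}. -/
noncomputable def Mmat (q : ℝ) (n l : ℕ) : Matrix (Fin (l + 1)) (Fin (l + 1)) ℝ :=
  Matrix.of fun i s => (-q) ^ ((s : ℕ) * (2 * n - (i : ℕ)))

open Finset

noncomputable def qB (x : ℝ) : ℕ → ℕ → ℝ
  | 0, 0 => 1
  | 0, _ + 1 => 0
  | _ + 1, 0 => 1
  | n + 1, k + 1 => qB x n k + x ^ (k + 1) * qB x n (k + 1)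

lemma qB_zero_right (x : ℝ) (n : ℕ) : qB x n 0 = 1 := by cases n <;> rfl

lemma qB_succ_succ (x : ℝ) (n k : ℕ) :
    qB x (n + 1) (k + 1) = qB x n k + x ^ (k + 1) * qB x n (k + 1) := rfl

lemma qB_of_lt (x : ℝ) : ∀ {n k : ℕ}, n < k → qB x n k = 0 := by
  intro n
  induction n with
  | zero => intro k hk; obtain ⟨k, rfl⟩ := Nat.exists_eq_add_of_lt hk; rfl
  | succ n ih =>
    intro k hk
    obtain ⟨k, rfl⟩ : ∃ m, k = m + 1 := ⟨k - 1, by omega⟩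
    rw [qB_succ_succ, ih (by omega), ih (by omega)]
    ring

lemma qB_self (x : ℝ) (n : ℕ) : qB x n n = 1 := by
  induction n with
  | zero => rfl
  | succ n ih => rw [qB_succ_succ, ih, qB_of_lt x (by omega)]; ring

lemma qB_one (x : ℝ) (n : ℕ) : qB x n 1 = ∑ j ∈ range n, x ^ j := by
  induction n with
  | zero => simp [qB]
  | succ n ih =>
    rw [show qB x (n+1) 1 = qB x n 0 + x ^ 1 * qB x n 1 from rfl, qB_zero_right, ih,
      Finset.sum_range_succ']
    have : x ^ 1 * ∑ j ∈ range n, x ^ j = ∑ j ∈ range n, x ^ (j + 1) := by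
      rw [Finset.mul_sum]
      exact Finset.sum_congr rfl fun j _ => by rw [pow_succ]; ring
    rw [this]
    simp [add_comm]

/-- The second q-Pascal rule. -/
lemma qB_ruleB (x : ℝ) : ∀ (n k : ℕ),
    qB x (n + 1) (k + 1) = qB x n (k + 1) + x ^ (n - k) * qB x n k := by
  intro n
  induction n with
  | zero =>
    intro k
    cases k with
    | zero => norm_num [qB]
    | succ k => norm_num [qB, qB_of_lt x (Nat.succ_pos k)]
  | succ n ih =>
    intro k
    cases k with
    | zero =>
      rw [show qB x (n+1+1) (0+1) = qB x (n+1) 0 + x ^ (0+1) * qB x (n+1) 1 from rfl,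
        qB_zero_right, qB_one]
      have : x ^ (0 + 1) * ∑ j ∈ range (n + 1), x ^ j
          = ∑ j ∈ range (n + 1), x ^ (j + 1) := by
        rw [Finset.mul_sum]
        exact Finset.sum_congr rfl fun j _ => by rw [pow_succ]; ring
      rw [this]
      have h1 : (1 : ℝ) + ∑ j ∈ range (n + 1), x ^ (j + 1)
          = ∑ j ∈ range (n + 1 + 1), x ^ j := by
        rw [Finset.sum_range_succ' (fun j => x ^ j) (n + 1)]
        ring
      rw [h1, Finset.sum_range_succ]
      norm_num
    | succ k =>
      have L : qB x (n + 1 + 1) (k + 1 + 1)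
          = qB x n (k + 1) + x ^ (n - k) * qB x n k + x ^ (k + 1 + 1) * qB x n (k + 1 + 1)
            + x ^ (k + 1 + 1) * (x ^ (n - (k + 1)) * qB x n (k + 1)) := by
        rw [qB_succ_succ, ih k, ih (k + 1)]; ring
      have R : qB x (n + 1) (k + 1 + 1) + x ^ (n + 1 - (k + 1)) * qB x (n + 1) (k + 1)
          = qB x n (k + 1) + x ^ (k + 1 + 1) * qB x n (k + 1 + 1)
            + x ^ (n - k) * qB x n k + x ^ (n - k) * (x ^ (k + 1) * qB x n (k + 1)) := by
        rw [qB_succ_succ, qB_succ_succ, show n + 1 - (k + 1) = n - k from by omega]; ring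
      rw [L, R]
      rcases le_or_gt (k + 1) n with h | h
      · have e1 : x ^ (k + 1 + 1) * x ^ (n - (k + 1)) = x ^ (n + 1) := by
          rw [← pow_add]; congr 1; omega
        have e2 : x ^ (n - k) * x ^ (k + 1) = x ^ (n + 1) := by
          rw [← pow_add]; congr 1; omega
        have e1' : x ^ (k + 1 + 1) * (x ^ (n - (k + 1)) * qB x n (k + 1))
            = x ^ (n + 1) * qB x n (k + 1) := by rw [← mul_assoc, e1]
        have e2' : x ^ (n - k) * (x ^ (k + 1) * qB x n (k + 1))
            = x ^ (n + 1) * qB x n (k + 1) := by rw [← mul_assoc, e2]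
        rw [e1', e2']
        ring
      · have h1 : qB x n (k + 1) = 0 := qB_of_lt x h
        have h2 : qB x n (k + 1 + 1) = 0 := qB_of_lt x (by omega)
        rw [h1, h2]
        ring

lemma prod_Icc_ne_zero (x : ℝ) (hx : ∀ j : ℕ, 1 ≤ j → x ^ j ≠ 1) (a b : ℕ) (ha : 1 ≤ a) :
    ∏ j ∈ Icc a b, (x ^ j - 1) ≠ 0 := by
  rw [Finset.prod_ne_zero_iff]
  intro j hj
  rw [Finset.mem_Icc] at hj
  exact sub_ne_zero.mpr (hx j (le_trans ha hj.1))

lemma qB_closed (x : ℝ) (hx : ∀ j : ℕ, 1 ≤ j → x ^ j ≠ 1) :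
    ∀ n k : ℕ, k ≤ n →
      qB x n k = (∏ j ∈ Icc (n - k + 1) n, (x ^ j - 1)) / ∏ j ∈ Icc 1 k, (x ^ j - 1) := by
  intro n
  induction n with
  | zero =>
    intro k hk
    interval_cases k
    simp [qB]
  | succ n ih =>
    intro k hk
    cases k with
    | zero =>
      rw [qB_zero_right, Finset.Icc_eq_empty (by omega), Finset.Icc_eq_empty (by omega)]
      simp
    | succ k =>
      by_cases hkn : k = n
      · subst hkn
        rw [qB_self, show k + 1 - (k + 1) + 1 = 1 from by omega,
          div_self (prod_Icc_ne_zero x hx 1 (k + 1) le_rfl)]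
      · have hk' : k + 1 ≤ n := by omega
        rw [qB_succ_succ, ih k (by omega), ih (k + 1) hk',
          show n - (k + 1) + 1 = n - k from by omega]
        have hA : ∏ j ∈ Icc 1 k, (x ^ j - 1) ≠ 0 := prod_Icc_ne_zero x hx 1 k le_rfl
        have hB : (x ^ (k + 1) - 1) ≠ 0 := sub_ne_zero.mpr (hx (k + 1) (by omega))
        have s1 : ∏ j ∈ Icc 1 (k + 1), (x ^ j - 1)
            = (∏ j ∈ Icc 1 k, (x ^ j - 1)) * (x ^ (k + 1) - 1) :=
          Finset.prod_Icc_succ_top (by omega) _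
        have s2 : ∏ j ∈ Icc (n - k) n, (x ^ j - 1)
            = (x ^ (n - k) - 1) * ∏ j ∈ Icc (n - k + 1) n, (x ^ j - 1) := by
          rw [Finset.Icc_eq_cons_Ioc (by omega : n - k ≤ n), Finset.prod_cons,
            ← Finset.Icc_add_one_left_eq_Ioc]
        have s3 : ∏ j ∈ Icc (n + 1 - (k + 1) + 1) (n + 1), (x ^ j - 1)
            = (∏ j ∈ Icc (n - k + 1) n, (x ^ j - 1)) * (x ^ (n + 1) - 1) := by
          rw [show n + 1 - (k + 1) + 1 = n - k + 1 from by omega]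
          exact Finset.prod_Icc_succ_top (by omega) _
        rw [s1, s2, s3]
        have epow : x ^ (k + 1) * x ^ (n - k) = x ^ (n + 1) := by
          rw [← pow_add]; congr 1; omega
        set P := ∏ j ∈ Icc (n - k + 1) n, (x ^ j - 1) with hP
        set A := ∏ j ∈ Icc 1 k, (x ^ j - 1) with hA2
        field_simp
        linear_combination P * epow

def Tn (k : ℕ) : ℕ := ∑ j ∈ range k, j

lemma Tn_succ (k : ℕ) : Tn (k + 1) = Tn k + k := Finset.sum_range_succ _ k

lemma Tn_two_mul (k : ℕ) : 2 * Tn k = k * (k - 1) := by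
  unfold Tn
  rw [mul_comm]
  exact Finset.sum_range_id_mul_two k

def ekE (M m k : ℕ) : ℤ := (M : ℤ) * k + (Tn (m - k) : ℤ) - (Tn m : ℤ)

lemma ekE_zero (M m : ℕ) : ekE M m 0 = 0 := by simp [ekE]

lemma ekE_step1 (M m k : ℕ) :
    ekE M (m + 1) (k + 1) = (M : ℤ) - m + ekE M m k := by
  unfold ekE
  rw [Nat.succ_sub_succ, Tn_succ]
  push_cast
  ring

lemma ekE_step2 (M m k : ℕ) (hk : k < m) :
    ekE M m (k + 1) = ekE M (m + 1) (k + 1) + (k + 1) := by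
  unfold ekE
  obtain ⟨a, ha⟩ : ∃ a, m - (k + 1) = a := ⟨_, rfl⟩
  have h3 : m + 1 - (k + 1) = a + 1 := by omega
  have h4 : (a : ℤ) = (m : ℤ) - k - 1 := by omega
  rw [ha, h3, Tn_succ a, Tn_succ m]
  push_cast
  linarith

lemma rothe (x : ℝ) (hx : x ≠ 0) (M : ℕ) : ∀ (m : ℕ) (z : ℝ),
    ∏ j ∈ range m, (z - x ^ ((M : ℤ) - (j : ℤ)))
      = ∑ k ∈ range (m + 1), (-1 : ℝ) ^ k * x ^ ekE M m k * qB x m k * z ^ (m - k) := by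
  intro m
  induction m with
  | zero => intro z; simp [ekE, Tn, qB]
  | succ m ih =>
    intro z
    rw [Finset.prod_range_succ, ih z]
    have h1 : (∑ k ∈ range (m + 1), (-1:ℝ) ^ k * x ^ ekE M m k * qB x m k * z ^ (m - k))
          * (z - x ^ ((M : ℤ) - (m : ℤ)))
        = (∑ k ∈ range (m + 1), (-1:ℝ) ^ k * x ^ ekE M m k * qB x m k * z ^ (m + 1 - k))
          - ∑ k ∈ range (m + 1),
              (x ^ ((M : ℤ) - (m : ℤ)) * ((-1:ℝ) ^ k * x ^ ekE M m k * qB x m k))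
                * z ^ (m - k) := by
      rw [mul_sub, Finset.sum_mul, Finset.sum_mul]
      congr 1
      · refine Finset.sum_congr rfl fun k hk => ?_
        rw [Finset.mem_range] at hk
        have hz : z ^ (m - k) * z = z ^ (m + 1 - k) := by
          rw [← pow_succ]; congr 1; omega
        rw [mul_assoc, hz]
      · exact Finset.sum_congr rfl fun k _ => by ring
    rw [h1]
    have h3 : (∑ k ∈ range (m + 1), (-1:ℝ) ^ k * x ^ ekE M m k * qB x m k * z ^ (m + 1 - k))
        = (∑ k ∈ range (m + 1),
            (-1:ℝ) ^ (k + 1) * x ^ ekE M m (k + 1) * qB x m (k + 1) * z ^ (m - k))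
          + z ^ (m + 1) := by
      rw [Finset.sum_range_succ'
        (fun k => (-1:ℝ) ^ k * x ^ ekE M m k * qB x m k * z ^ (m + 1 - k)) m]
      simp only [Nat.succ_sub_succ, pow_zero, ekE_zero, zpow_zero, qB_zero_right,
        Nat.sub_zero, one_mul, mul_one]
      congr 1
      rw [Finset.sum_range_succ]
      rw [qB_of_lt x (by omega : m < m + 1)]
      ring
    rw [h3]
    have h2 : (∑ k ∈ range (m + 1 + 1),
          (-1:ℝ) ^ k * x ^ ekE M (m + 1) k * qB x (m + 1) k * z ^ (m + 1 - k))
        = (∑ k ∈ range (m + 1),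
            (-1:ℝ) ^ (k + 1) * x ^ ekE M (m + 1) (k + 1) * qB x (m + 1) (k + 1) * z ^ (m - k))
          + z ^ (m + 1) := by
      rw [Finset.sum_range_succ'
        (fun k => (-1:ℝ) ^ k * x ^ ekE M (m + 1) k * qB x (m + 1) k * z ^ (m + 1 - k)) (m + 1)]
      simp only [Nat.succ_sub_succ, pow_zero, ekE_zero, zpow_zero, qB_zero_right,
        Nat.sub_zero, one_mul, mul_one]
    rw [h2]
    have key : ∀ k ∈ range (m + 1),
        (-1:ℝ) ^ (k + 1) * x ^ ekE M (m + 1) (k + 1) * qB x (m + 1) (k + 1) * z ^ (m - k)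
          = (-1:ℝ) ^ (k + 1) * x ^ ekE M m (k + 1) * qB x m (k + 1) * z ^ (m - k)
            - (x ^ ((M : ℤ) - (m : ℤ)) * ((-1:ℝ) ^ k * x ^ ekE M m k * qB x m k))
              * z ^ (m - k) := by
      intro k hk
      rw [Finset.mem_range] at hk
      rw [qB_succ_succ]
      rcases lt_or_eq_of_le (Nat.lt_succ_iff.mp hk) with hlt | heq
      · have e1 : (x : ℝ) ^ ekE M m (k + 1)
            = x ^ ekE M (m + 1) (k + 1) * x ^ (k + 1 : ℕ) := by
          rw [← zpow_natCast x (k + 1), ← zpow_add₀ hx, ekE_step2 M m k hlt]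
          push_cast; ring_nf
        have e2 : (x : ℝ) ^ ekE M (m + 1) (k + 1)
            = x ^ ((M : ℤ) - (m : ℤ)) * x ^ ekE M m k := by
          rw [← zpow_add₀ hx, ekE_step1]
        rw [e1, e2]
        ring
      · subst heq
        rw [qB_of_lt x (by omega : k < k + 1)]
        have e2 : (x : ℝ) ^ ekE M (k + 1) (k + 1)
            = x ^ ((M : ℤ) - (k : ℤ)) * x ^ ekE M k k := by
          rw [← zpow_add₀ hx, ekE_step1]
        rw [e2]
        ring
    rw [Finset.sum_congr rfl key]
    rw [Finset.sum_sub_distrib]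
    ring

lemma newton (x : ℝ) (hx : x ≠ 0) (M : ℕ) : ∀ (m : ℕ) (z : ℝ),
    z ^ m = ∑ l ∈ range (m + 1),
      x ^ (((m : ℤ) - l) * ((M : ℤ) - l)) * qB x m l
        * ∏ j ∈ range l, (z - x ^ ((M : ℤ) - (j : ℤ))) := by
  intro m
  induction m with
  | zero => intro z; simp [qB]
  | succ m ih =>
    intro z
    have hz : z ^ (m + 1) = (∑ l ∈ range (m + 1),
        x ^ (((m : ℤ) - l) * ((M : ℤ) - l)) * qB x m l
          * ∏ j ∈ range l, (z - x ^ ((M : ℤ) - (j : ℤ)))) * z := by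
      rw [← ih z, pow_succ]
    rw [hz, Finset.sum_mul]
    have expand : ∀ l ∈ range (m + 1),
        (x ^ (((m : ℤ) - l) * ((M : ℤ) - l)) * qB x m l
          * ∏ j ∈ range l, (z - x ^ ((M : ℤ) - (j : ℤ)))) * z
        = x ^ (((m : ℤ) - l) * ((M : ℤ) - l)) * qB x m l
            * ∏ j ∈ range (l + 1), (z - x ^ ((M : ℤ) - (j : ℤ)))
          + (x ^ (((m : ℤ) - l) * ((M : ℤ) - l)) * qB x m l * x ^ ((M : ℤ) - (l : ℤ)))
            * ∏ j ∈ range l, (z - x ^ ((M : ℤ) - (j : ℤ))) := by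
      intro l _
      rw [Finset.prod_range_succ]
      ring
    rw [Finset.sum_congr rfl expand, Finset.sum_add_distrib]
    -- second sum: shift index
    have hsecond : (∑ l ∈ range (m + 1),
        (x ^ (((m : ℤ) - l) * ((M : ℤ) - l)) * qB x m l * x ^ ((M : ℤ) - (l : ℤ)))
          * ∏ j ∈ range l, (z - x ^ ((M : ℤ) - (j : ℤ))))
        = (∑ l ∈ range (m + 1),
            (x ^ (((m : ℤ) - (l + 1)) * ((M : ℤ) - (l + 1))) * qB x m (l + 1)
              * x ^ ((M : ℤ) - ((l : ℤ) + 1)))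
              * ∏ j ∈ range (l + 1), (z - x ^ ((M : ℤ) - (j : ℤ))))
          + x ^ ((m : ℤ) * M + M) := by
      rw [Finset.sum_range_succ' (fun l =>
        (x ^ (((m : ℤ) - l) * ((M : ℤ) - l)) * qB x m l * x ^ ((M : ℤ) - (l : ℤ)))
          * ∏ j ∈ range l, (z - x ^ ((M : ℤ) - (j : ℤ)))) m]
      congr 1
      · rw [Finset.sum_range_succ, qB_of_lt x (by omega : m < m + 1)]
        simp only [zero_mul, mul_zero, add_zero]
        refine Finset.sum_congr rfl fun l _ => ?_
        push_cast
        ring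
      · simp only [Nat.cast_zero, sub_zero, qB_zero_right, Finset.range_zero,
          Finset.prod_empty, mul_one, one_mul]
        rw [← zpow_add₀ hx]
        try congr 1
        try ring
    rw [hsecond]
    push_cast
    -- goal sum: split off the 0 term
    rw [Finset.sum_range_succ' (fun l =>
      x ^ (((m : ℤ) + 1 - l) * ((M : ℤ) - l)) * qB x (m + 1) l
        * ∏ j ∈ range l, (z - x ^ ((M : ℤ) - (j : ℤ)))) (m + 1)]
    have hzero : x ^ (((m : ℤ) + 1 - (0 : ℕ)) * ((M : ℤ) - (0 : ℕ))) * qB x (m + 1) 0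
        * ∏ j ∈ range 0, (z - x ^ ((M : ℤ) - (j : ℤ))) = x ^ ((m : ℤ) * M + M) := by
      simp only [Nat.cast_zero, sub_zero, qB_zero_right, Finset.range_zero,
        Finset.prod_empty, mul_one]
      congr 1
      ring
    rw [hzero]
    have keyterm : ∀ l ∈ range (m + 1),
        x ^ (((m : ℤ) + 1 - (((l + 1) : ℕ) : ℤ)) * ((M : ℤ) - (((l + 1) : ℕ) : ℤ)))
          * qB x (m + 1) (l + 1) * ∏ j ∈ range (l + 1), (z - x ^ ((M : ℤ) - (j : ℤ)))
        = x ^ (((m : ℤ) - l) * ((M : ℤ) - l)) * qB x m l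
            * ∏ j ∈ range (l + 1), (z - x ^ ((M : ℤ) - (j : ℤ)))
          + (x ^ (((m : ℤ) - (l + 1)) * ((M : ℤ) - (l + 1))) * qB x m (l + 1)
              * x ^ ((M : ℤ) - ((l : ℤ) + 1)))
            * ∏ j ∈ range (l + 1), (z - x ^ ((M : ℤ) - (j : ℤ))) := by
      intro l hl
      rw [Finset.mem_range] at hl
      rw [qB_ruleB]
      have e1 : (x : ℝ) ^ (((m : ℤ) + 1 - (((l + 1) : ℕ) : ℤ)) * ((M : ℤ) - (((l + 1) : ℕ) : ℤ)))
            * x ^ (m - l : ℕ)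
          = x ^ (((m : ℤ) - l) * ((M : ℤ) - l)) := by
        rw [← zpow_natCast x (m - l), ← zpow_add₀ hx]
        congr 1
        have : ((m - l : ℕ) : ℤ) = (m : ℤ) - l := by omega
        rw [this]
        push_cast
        ring
      have e2 : (x : ℝ) ^ (((m : ℤ) + 1 - (((l + 1) : ℕ) : ℤ)) * ((M : ℤ) - (((l + 1) : ℕ) : ℤ)))
          = x ^ (((m : ℤ) - (l + 1)) * ((M : ℤ) - (l + 1))) * x ^ ((M : ℤ) - ((l : ℤ) + 1)) := by
        rw [← zpow_add₀ hx]
        congr 1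
        push_cast
        ring
      calc x ^ (((m : ℤ) + 1 - (((l + 1) : ℕ) : ℤ)) * ((M : ℤ) - (((l + 1) : ℕ) : ℤ)))
            * (qB x m (l + 1) + x ^ (m - l : ℕ) * qB x m l)
            * ∏ j ∈ range (l + 1), (z - x ^ ((M : ℤ) - (j : ℤ)))
          = (x ^ (((m : ℤ) + 1 - (((l + 1) : ℕ) : ℤ)) * ((M : ℤ) - (((l + 1) : ℕ) : ℤ))))
              * qB x m (l + 1) * ∏ j ∈ range (l + 1), (z - x ^ ((M : ℤ) - (j : ℤ)))
            + (x ^ (((m : ℤ) + 1 - (((l + 1) : ℕ) : ℤ)) * ((M : ℤ) - (((l + 1) : ℕ) : ℤ)))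
                * x ^ (m - l : ℕ)) * qB x m l
              * ∏ j ∈ range (l + 1), (z - x ^ ((M : ℤ) - (j : ℤ))) := by ring
        _ = _ := by rw [e1, e2]; ring
    rw [Finset.sum_congr rfl keyterm, Finset.sum_add_distrib]
    ring


section Main

variable {q : ℝ}

lemma hx0 (hq : 1 < q) : (-q) ≠ 0 := by intro h; nlinarith [neg_eq_zero.mp h]

lemma zpow_ne_of_lt (hq : 1 < q) {a b : ℤ} (hab : a < b) : (-q) ^ a ≠ (-q) ^ b := by
  intro h
  have hx : (-q) ≠ 0 := hx0 hq
  have h1 : (-q) ^ (b - a) = 1 := by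
    rw [zpow_sub₀ hx, ← h, div_self (zpow_ne_zero _ hx)]
  set m := (b - a).toNat with hm
  have hm1 : 1 ≤ m := by omega
  have hmz : ((m : ℤ)) = b - a := by omega
  rw [← hmz, zpow_natCast] at h1
  have habs : |(-q) ^ m| = q ^ m := by
    rw [abs_pow, abs_neg, abs_of_pos (by linarith : (0:ℝ) < q)]
  have : (1:ℝ) < q ^ m := one_lt_pow₀ hq (by omega)
  rw [h1, abs_one] at habs
  linarith

lemma zpow_ne' (hq : 1 < q) {a b : ℤ} (hab : a ≠ b) : (-q) ^ a ≠ (-q) ^ b := by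
  rcases lt_or_gt_of_ne hab with h | h
  · exact zpow_ne_of_lt hq h
  · exact (zpow_ne_of_lt hq h).symm

lemma pow_ne_one' (hq : 1 < q) (j : ℕ) (hj : 1 ≤ j) : (-q) ^ j ≠ 1 := by
  have := zpow_ne' hq (show (j : ℤ) ≠ 0 by omega)
  rw [zpow_natCast, zpow_zero] at this
  exact this

/-- the denominator products -/
noncomputable def wprod (q : ℝ) (n l : ℕ) : ℝ :=
  ∏ j ∈ range l, ((-q) ^ (((2 * n : ℕ) : ℤ) - (l : ℤ)) - (-q) ^ (((2 * n : ℕ) : ℤ) - (j : ℤ)))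

lemma wprod_ne_zero (hq : 1 < q) (n l : ℕ) : wprod q n l ≠ 0 := by
  rw [wprod, Finset.prod_ne_zero_iff]
  intro j hj
  rw [Finset.mem_range] at hj
  exact sub_ne_zero.mpr (zpow_ne' hq (by omega))

/-- the explicit solution of the `l`-th linear system -/
noncomputable def dstar (q : ℝ) (n s l : ℕ) : ℝ :=
  (-1 : ℝ) ^ (l - s) * (-q) ^ ekE (2 * n) l (l - s) * qB (-q) l (l - s) / wprod q n l

lemma sum_dstar_num (hq : 1 < q) (n l : ℕ) (z : ℝ) :
    ∑ s ∈ range (l + 1),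
        (-1 : ℝ) ^ (l - s) * (-q) ^ ekE (2 * n) l (l - s) * qB (-q) l (l - s) * z ^ s
      = ∏ j ∈ range l, (z - (-q) ^ (((2 * n : ℕ) : ℤ) - (j : ℤ))) := by
  rw [rothe (-q) (hx0 hq) (2 * n) l z]
  rw [← Finset.sum_range_reflect
    (fun k => (-1:ℝ) ^ k * (-q) ^ ekE (2 * n) l k * qB (-q) l k * z ^ (l - k)) (l + 1)]
  refine Finset.sum_congr rfl fun s hs => ?_
  rw [Finset.mem_range] at hs
  have h1 : l + 1 - 1 - s = l - s := by omega
  have h2 : l - (l - s) = s := by omega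
  simp only [h1, h2]

lemma sum_dstar (hq : 1 < q) (n l : ℕ) (z : ℝ) :
    ∑ s ∈ range (l + 1), z ^ s * dstar q n s l
      = (∏ j ∈ range l, (z - (-q) ^ (((2 * n : ℕ) : ℤ) - (j : ℤ)))) / wprod q n l := by
  rw [← sum_dstar_num hq n l z, Finset.sum_div]
  exact Finset.sum_congr rfl fun s _ => by rw [dstar]; ring

/-- entry of `Mmat` as a power of the node -/
lemma Mmat_entry (hq : 1 < q) (n : ℕ) {i s : ℕ} (hi : i ≤ 2 * n) :
    (-q) ^ (s * (2 * n - i)) = ((-q) ^ (((2 * n : ℕ) : ℤ) - (i : ℤ))) ^ s := by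
  have h1 : ((2 * n - i : ℕ) : ℤ) = ((2 * n : ℕ) : ℤ) - (i : ℤ) := by omega
  rw [← h1, zpow_natCast, ← pow_mul, mul_comm]

lemma Mmat_eq_vandermonde (q : ℝ) (n l : ℕ) (hl : l ≤ 2 * n) :
    Mmat q n l = Matrix.vandermonde (fun i : Fin (l + 1) => (-q) ^ (2 * n - (i : ℕ))) := by
  ext i s
  rw [Mmat, Matrix.vandermonde]
  simp only [Matrix.of_apply]
  rw [mul_comm, pow_mul]

lemma Mmat_det_ne_zero (hq : 1 < q) (n l : ℕ) (hl : l ≤ 2 * n) :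
    (Mmat q n l).det ≠ 0 := by
  rw [Mmat_eq_vandermonde q n l hl, Matrix.det_vandermonde]
  rw [Finset.prod_ne_zero_iff]
  intro i _
  rw [Finset.prod_ne_zero_iff]
  intro j hj
  rw [Finset.mem_Ioi] at hj
  have hij : (i : ℕ) < (j : ℕ) := hj
  refine sub_ne_zero.mpr ?_
  have h1 : ((2 * n - (j:ℕ) : ℕ) : ℤ) = ((2 * n : ℕ) : ℤ) - ((j:ℕ) : ℤ) := by omega
  have h2 : ((2 * n - (i:ℕ) : ℕ) : ℤ) = ((2 * n : ℕ) : ℤ) - ((i:ℕ) : ℤ) := by omega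
  rw [← zpow_natCast (-q) (2 * n - (j:ℕ)), ← zpow_natCast (-q) (2 * n - (i:ℕ)), h1, h2]
  exact zpow_ne' hq (by omega)

lemma mulVec_injective (hq : 1 < q) (n l : ℕ) (hl : l ≤ 2 * n)
    (a b : Fin (l + 1) → ℝ) (h : (Mmat q n l).mulVec a = (Mmat q n l).mulVec b) :
    a = b := by
  have hdet : IsUnit (Mmat q n l).det := (Mmat_det_ne_zero hq n l hl).isUnit
  have := congrArg (fun w => ((Mmat q n l)⁻¹).mulVec w) h
  simpa [Matrix.mulVec_mulVec, Matrix.nonsing_inv_mul _ hdet] using this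

lemma d_eq_dstar (hq : 1 < q) (n : ℕ) (d : ℕ → ℕ → ℝ)
    (hd : ∀ l, l ≤ 2 * n →
      (Mmat q n l).mulVec (fun i => d (i : ℕ) l) = Pi.single (Fin.last l) 1)
    {s l : ℕ} (hl : l ≤ 2 * n) (hs : s ≤ l) : d s l = dstar q n s l := by
  have key : (Mmat q n l).mulVec (fun s : Fin (l + 1) => dstar q n (s : ℕ) l)
      = Pi.single (Fin.last l) 1 := by
    funext i
    have hi2 : (i : ℕ) ≤ 2 * n := by have := i.isLt; omega
    have hrow : (Mmat q n l).mulVec (fun s : Fin (l + 1) => dstar q n (s : ℕ) l) i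
        = ∑ s ∈ range (l + 1),
            ((-q) ^ (((2 * n : ℕ) : ℤ) - ((i : ℕ) : ℤ))) ^ s * dstar q n s l := by
      rw [Matrix.mulVec, dotProduct]
      rw [← Fin.sum_univ_eq_sum_range
        (fun s => ((-q) ^ (((2 * n : ℕ) : ℤ) - ((i : ℕ) : ℤ))) ^ s * dstar q n s l) (l + 1)]
      refine Finset.sum_congr rfl fun s _ => ?_
      rw [Mmat]
      simp only [Matrix.of_apply]
      rw [Mmat_entry hq n hi2]
    rw [hrow, sum_dstar hq n l]
    by_cases hil : (i : ℕ) = l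
    · have hlast : i = Fin.last l := Fin.ext (by simpa using hil)
      rw [hlast, Pi.single_eq_same, Fin.val_last]
      have : (∏ j ∈ range l, ((-q) ^ (((2 * n : ℕ) : ℤ) - ((l : ℕ) : ℤ))
          - (-q) ^ (((2 * n : ℕ) : ℤ) - (j : ℤ)))) = wprod q n l := rfl
      rw [this, div_self (wprod_ne_zero hq n l)]
    · have hi : (i : ℕ) < l := lt_of_le_of_ne (by have := i.isLt; omega) hil
      have hprod : (∏ j ∈ range l, ((-q) ^ (((2 * n : ℕ) : ℤ) - ((i : ℕ) : ℤ))
          - (-q) ^ (((2 * n : ℕ) : ℤ) - (j : ℤ)))) = 0 :=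
        Finset.prod_eq_zero (Finset.mem_range.mpr hi) (sub_self _)
      rw [hprod, zero_div]
      rw [Pi.single_eq_of_ne (fun h => hil (by simpa using congrArg Fin.val h))]
  have heq := mulVec_injective hq n l hl _ _ ((hd l hl).trans key.symm)
  exact congrFun heq ⟨s, by omega⟩

lemma row_delta (hq : 1 < q) (n : ℕ) (d : ℕ → ℕ → ℝ)
    (hd : ∀ l, l ≤ 2 * n →
      (Mmat q n l).mulVec (fun i => d (i : ℕ) l) = Pi.single (Fin.last l) 1)
    {i l : ℕ} (hil : i ≤ l) (hl : l ≤ 2 * n) :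
    ∑ s ∈ range (l + 1), (-q) ^ (s * (2 * n - i)) * d s l = if i = l then 1 else 0 := by
  have h := congrFun (hd l hl) ⟨i, by omega⟩
  rw [Matrix.mulVec, dotProduct] at h
  rw [← Fin.sum_univ_eq_sum_range (fun s => (-q) ^ (s * (2 * n - i)) * d s l) (l + 1)]
  have hL : ∑ s : Fin (l + 1), (-q) ^ ((s : ℕ) * (2 * n - i)) * d (s : ℕ) l
      = ∑ s : Fin (l + 1), Mmat q n l ⟨i, by omega⟩ s * d (s : ℕ) l := by
    refine Finset.sum_congr rfl fun s _ => ?_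
    rw [Mmat]
    simp only [Matrix.of_apply]
  rw [hL, h, Pi.single_apply]
  simp [Fin.ext_iff, eq_comm]

lemma row_lower (hq : 1 < q) (n : ℕ) (d : ℕ → ℕ → ℝ)
    (hd : ∀ l, l ≤ 2 * n →
      (Mmat q n l).mulVec (fun i => d (i : ℕ) l) = Pi.single (Fin.last l) 1)
    {i l : ℕ} (hl : l ≤ 2 * n) (hi : i ≤ 2 * n) :
    ∑ s ∈ range (l + 1), (-q) ^ (s * (2 * n - i)) * d s l
      = (∏ j ∈ range l, ((-q) ^ (((2 * n : ℕ) : ℤ) - (i : ℤ))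
          - (-q) ^ (((2 * n : ℕ) : ℤ) - (j : ℤ)))) / wprod q n l := by
  rw [← sum_dstar hq n l]
  refine Finset.sum_congr rfl fun s hs => ?_
  rw [Finset.mem_range] at hs
  rw [d_eq_dstar hq n d hd hl (by omega), Mmat_entry hq n hi]

noncomputable def Kstar (q : ℝ) (n i : ℕ) : ℝ :=
  if i = 0 then 0 else
    (-q) ^ (((n : ℤ) - (i : ℤ)) * (((2 * n : ℕ) : ℤ) - (i : ℤ)) - 4 * (n : ℤ) ^ 2)
      * qB (-q) n i * wprod q n i

lemma newton_eval (hq : 1 < q) (n : ℕ) {i : ℕ} (hi : i ≤ n) :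
    ∑ l ∈ range (i + 1), (-q) ^ (((n : ℤ) - (l : ℤ)) * (((2 * n : ℕ) : ℤ) - (l : ℤ)))
        * qB (-q) n l
        * ∏ j ∈ range l, ((-q) ^ (((2 * n : ℕ) : ℤ) - (i : ℤ))
            - (-q) ^ (((2 * n : ℕ) : ℤ) - (j : ℤ)))
      = (-q) ^ (((((2 * n : ℕ) : ℤ) - (i : ℤ))) * (n : ℤ)) := by
  have hN := newton (-q) (hx0 hq) (2 * n) n ((-q) ^ (((2 * n : ℕ) : ℤ) - (i : ℤ)))
  rw [← zpow_natCast ((-q) ^ (((2 * n : ℕ) : ℤ) - (i : ℤ))) n, ← zpow_mul] at hN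
  have hsub : ∑ l ∈ range (i + 1), (-q) ^ (((n : ℤ) - (l : ℤ)) * (((2 * n : ℕ) : ℤ) - (l : ℤ)))
        * qB (-q) n l
        * ∏ j ∈ range l, ((-q) ^ (((2 * n : ℕ) : ℤ) - (i : ℤ))
            - (-q) ^ (((2 * n : ℕ) : ℤ) - (j : ℤ)))
      = ∑ l ∈ range (n + 1), (-q) ^ (((n : ℤ) - (l : ℤ)) * (((2 * n : ℕ) : ℤ) - (l : ℤ)))
        * qB (-q) n l
        * ∏ j ∈ range l, ((-q) ^ (((2 * n : ℕ) : ℤ) - (i : ℤ))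
            - (-q) ^ (((2 * n : ℕ) : ℤ) - (j : ℤ))) := by
    refine Finset.sum_subset (Finset.range_subset_range.mpr (by omega)) fun l hl hnl => ?_
    rw [Finset.mem_range] at hl
    rw [Finset.mem_range] at hnl
    have hil : i < l := by omega
    have hprod : (∏ j ∈ range l, ((-q) ^ (((2 * n : ℕ) : ℤ) - (i : ℤ))
        - (-q) ^ (((2 * n : ℕ) : ℤ) - (j : ℤ)))) = 0 :=
      Finset.prod_eq_zero (Finset.mem_range.mpr hil) (sub_self _)
    rw [hprod, mul_zero]
  rw [hsub, ← hN]

lemma K_eq_Kstar (hq : 1 < q) {n : ℕ} (hn : 1 ≤ n)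
    (d : ℕ → ℕ → ℝ)
    (hd : ∀ l, l ≤ 2 * n →
      (Mmat q n l).mulVec (fun i => d (i : ℕ) l) = Pi.single (Fin.last l) 1)
    (Δ : Matrix (Fin (2 * n + 1)) (Fin (2 * n + 1)) ℝ)
    (hΔ : ∀ i l : Fin (2 * n + 1),
      Δ i l = if (i : ℕ) ≤ (l : ℕ) then d (i : ℕ) (l : ℕ) else 0)
    (v : Fin (2 * n + 1) → ℝ)
    (hv : ∀ k : Fin (2 * n + 1), v k =
      if (k : ℕ) = 0 then 0
      else (-q) ^ ((n : ℤ) * (2 * (n : ℤ) - ((k : ℕ) : ℤ)) - 4 * (n : ℤ) ^ 2)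
        - (-q) ^ (-2 * (n : ℤ) ^ 2))
    (K : Fin (2 * n + 1) → ℝ)
    (hK : (Mmat q n (2 * n) * Δ).mulVec K = v) :
    ∀ i : ℕ, ∀ hi : i ≤ n, K ⟨i, by omega⟩ = Kstar q n i := by
  have hx : (-q) ≠ 0 := hx0 hq
  intro i
  induction i using Nat.strong_induction_on with
  | _ i IH =>
  intro hi
  have hi' : i < 2 * n + 1 := by omega
  -- the auxiliary ℕ-indexed version of K
  set Kn : ℕ → ℝ := fun l => if h : l < 2 * n + 1 then K ⟨l, h⟩ else 0 with hKndef
  have hKnl : ∀ l : Fin (2 * n + 1), Kn (l : ℕ) = K l := by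
    intro l
    simp only [hKndef, l.isLt, dif_pos, Fin.eta]
  -- entries of the product matrix
  have centry : ∀ l : Fin (2 * n + 1), (Mmat q n (2 * n) * Δ) ⟨i, hi'⟩ l
      = ∑ s ∈ range ((l : ℕ) + 1), (-q) ^ (s * (2 * n - i)) * d s (l : ℕ) := by
    intro l
    rw [Matrix.mul_apply]
    have hterm : ∀ s : Fin (2 * n + 1), Mmat q n (2 * n) ⟨i, hi'⟩ s * Δ s l
        = (-q) ^ ((s : ℕ) * (2 * n - i))
            * (if (s : ℕ) ≤ (l : ℕ) then d (s : ℕ) (l : ℕ) else 0) := by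
      intro s
      rw [hΔ s l, Mmat]
      simp only [Matrix.of_apply]
    have h1 : (∑ s : Fin (2 * n + 1), Mmat q n (2 * n) ⟨i, hi'⟩ s * Δ s l)
        = ∑ s ∈ range (2 * n + 1),
            (-q) ^ (s * (2 * n - i)) * (if s ≤ (l : ℕ) then d s (l : ℕ) else 0) := by
      rw [← Fin.sum_univ_eq_sum_range (fun s' =>
        (-q) ^ (s' * (2 * n - i)) * (if s' ≤ (l : ℕ) then d s' (l : ℕ) else 0)) (2 * n + 1)]
      exact Finset.sum_congr rfl fun s _ => hterm s
    rw [h1]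
    rw [← Finset.sum_subset (Finset.range_subset_range.mpr (by omega : (l : ℕ) + 1 ≤ 2 * n + 1))
      (fun s _ hns => by
        rw [Finset.mem_range] at hns
        rw [if_neg (by omega), mul_zero])]
    exact Finset.sum_congr rfl fun s hs => by
      rw [Finset.mem_range] at hs
      rw [if_pos (by omega)]
  -- row i of the system
  have hrow0 := congrFun hK ⟨i, hi'⟩
  rw [Matrix.mulVec, dotProduct] at hrow0
  have hbody : ∀ l : Fin (2 * n + 1), (Mmat q n (2 * n) * Δ) ⟨i, hi'⟩ l * K l
      = (∑ s ∈ range ((l : ℕ) + 1), (-q) ^ (s * (2 * n - i)) * d s (l : ℕ)) * Kn (l : ℕ) := by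
    intro l
    rw [centry l, hKnl l]
  have hrow : ∑ l ∈ range (2 * n + 1),
      (∑ s ∈ range (l + 1), (-q) ^ (s * (2 * n - i)) * d s l) * Kn l = v ⟨i, hi'⟩ := by
    rw [← Fin.sum_univ_eq_sum_range (fun l' =>
      (∑ s ∈ range (l' + 1), (-q) ^ (s * (2 * n - i)) * d s l') * Kn l') (2 * n + 1), ← hrow0]
    exact Finset.sum_congr rfl fun l _ => (hbody l).symm
  -- kill the terms with l > i
  rw [← Finset.sum_subset (Finset.range_subset_range.mpr (by omega : i + 1 ≤ 2 * n + 1))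
    (fun l hl hnl => by
      rw [Finset.mem_range] at hl
      rw [Finset.mem_range] at hnl
      rw [row_delta hq n d hd (by omega) (by omega), if_neg (by omega), zero_mul])] at hrow
  rw [Finset.sum_range_succ] at hrow
  rw [row_delta hq n d hd (le_refl i) (by omega), if_pos rfl, one_mul] at hrow
  have hKni : Kn i = K ⟨i, hi'⟩ := by simp only [hKndef, hi', dif_pos]
  rw [hKni] at hrow
  -- the coefficients with l < i
  have hlower : ∀ l, l < i → (∑ s ∈ range (l + 1), (-q) ^ (s * (2 * n - i)) * d s l) * Kn l
      = ((∏ j ∈ range l, ((-q) ^ (((2 * n : ℕ) : ℤ) - (i : ℤ))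
          - (-q) ^ (((2 * n : ℕ) : ℤ) - (j : ℤ)))) / wprod q n l) * Kstar q n l := by
    intro l hl
    rw [row_lower hq n d hd (by omega) (by omega)]
    congr 1
    have : Kn l = K ⟨l, by omega⟩ := by simp only [hKndef, dif_pos (show l < 2*n+1 by omega)]
    rw [this]
    exact IH l hl (by omega)
  rw [Finset.sum_congr rfl fun l hl => hlower l (Finset.mem_range.mp hl)] at hrow
  -- now hrow : ∑_{l<i} (P l / w l) * Kstar l + K ⟨i⟩ = v ⟨i⟩
  rcases Nat.eq_zero_or_pos i with hizero | hipos
  · subst hizero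
    rw [hv ⟨0, hi'⟩] at hrow
    simp only [Finset.range_zero, Finset.sum_empty, zero_add] at hrow
    rw [hrow, Kstar, if_pos rfl]
    simp
  · -- the main identity
    have claimF : ∑ l ∈ range (i + 1),
          (-q) ^ (((n : ℤ) - (l : ℤ)) * (((2 * n : ℕ) : ℤ) - (l : ℤ)) - 4 * (n : ℤ) ^ 2)
            * qB (-q) n l
            * ∏ j ∈ range l, ((-q) ^ (((2 * n : ℕ) : ℤ) - (i : ℤ))
                - (-q) ^ (((2 * n : ℕ) : ℤ) - (j : ℤ)))
        = (-q) ^ ((n : ℤ) * (2 * (n : ℤ) - (i : ℤ)) - 4 * (n : ℤ) ^ 2) := by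
      have hmul := congrArg (fun t => (-q) ^ (-(4 * (n : ℤ) ^ 2)) * t) (newton_eval hq n hi)
      simp only [Finset.mul_sum] at hmul
      have hL : ∀ l ∈ range (i + 1),
          (-q) ^ (-(4 * (n : ℤ) ^ 2)) * ((-q) ^ (((n : ℤ) - (l : ℤ)) * (((2 * n : ℕ) : ℤ) - (l : ℤ)))
            * qB (-q) n l
            * ∏ j ∈ range l, ((-q) ^ (((2 * n : ℕ) : ℤ) - (i : ℤ))
                - (-q) ^ (((2 * n : ℕ) : ℤ) - (j : ℤ))))
          = (-q) ^ (((n : ℤ) - (l : ℤ)) * (((2 * n : ℕ) : ℤ) - (l : ℤ)) - 4 * (n : ℤ) ^ 2)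
            * qB (-q) n l
            * ∏ j ∈ range l, ((-q) ^ (((2 * n : ℕ) : ℤ) - (i : ℤ))
                - (-q) ^ (((2 * n : ℕ) : ℤ) - (j : ℤ))) := by
        intro l _
        rw [show ((n : ℤ) - (l : ℤ)) * (((2 * n : ℕ) : ℤ) - (l : ℤ)) - 4 * (n : ℤ) ^ 2
            = -(4 * (n : ℤ) ^ 2) + ((n : ℤ) - (l : ℤ)) * (((2 * n : ℕ) : ℤ) - (l : ℤ)) from by ring,
          zpow_add₀ hx]
        ring
      rw [Finset.sum_congr rfl hL] at hmul
      rw [hmul, ← zpow_add₀ hx]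
      congr 1
      push_cast
      ring
    -- rewrite the summands of claimF in terms of Kstar
    have hterm2 : ∀ l ∈ range i,
        ((∏ j ∈ range l, ((-q) ^ (((2 * n : ℕ) : ℤ) - (i : ℤ))
            - (-q) ^ (((2 * n : ℕ) : ℤ) - (j : ℤ)))) / wprod q n l) * Kstar q n l
        = (-q) ^ (((n : ℤ) - (l : ℤ)) * (((2 * n : ℕ) : ℤ) - (l : ℤ)) - 4 * (n : ℤ) ^ 2)
            * qB (-q) n l
            * ∏ j ∈ range l, ((-q) ^ (((2 * n : ℕ) : ℤ) - (i : ℤ))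
                - (-q) ^ (((2 * n : ℕ) : ℤ) - (j : ℤ)))
          - (if l = 0 then (-q) ^ (-2 * (n : ℤ) ^ 2) else 0) := by
      intro l _
      rcases Nat.eq_zero_or_pos l with h0 | hpos
      · subst h0
        rw [Kstar, if_pos rfl, if_pos rfl, mul_zero, Finset.range_zero, Finset.prod_empty,
          qB_zero_right, mul_one, mul_one]
        rw [show ((n : ℤ) - ((0:ℕ) : ℤ)) * (((2 * n : ℕ) : ℤ) - ((0:ℕ) : ℤ)) - 4 * (n : ℤ) ^ 2
            = -2 * (n : ℤ) ^ 2 from by push_cast; ring]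
        ring
      · rw [Kstar, if_neg (by omega), if_neg (by omega), sub_zero]
        have hw := wprod_ne_zero hq n l
        field_simp
    rw [Finset.sum_congr rfl hterm2, Finset.sum_sub_distrib] at hrow
    rw [Finset.sum_ite_eq' (range i) 0 (fun _ => (-q) ^ (-2 * (n : ℤ) ^ 2)),
      if_pos (Finset.mem_range.mpr hipos)] at hrow
    rw [hv ⟨i, hi'⟩, if_neg (by simpa using (by omega : ¬ i = 0))] at hrow
    rw [← claimF, Finset.sum_range_succ] at hrow
    -- identify Kstar i
    have hKi : (-q) ^ (((n : ℤ) - (i : ℤ)) * (((2 * n : ℕ) : ℤ) - (i : ℤ)) - 4 * (n : ℤ) ^ 2)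
          * qB (-q) n i
          * ∏ j ∈ range i, ((-q) ^ (((2 * n : ℕ) : ℤ) - (i : ℤ))
              - (-q) ^ (((2 * n : ℕ) : ℤ) - (j : ℤ)))
        = Kstar q n i := by
      rw [Kstar, if_neg (by omega)]
      rfl
    rw [hKi] at hrow
    linarith [hrow]

lemma exp_identity {n i p : ℕ} (h1 : 1 ≤ i) (h2 : i ≤ n) (h3 : p ≤ i) :
    ((n : ℤ) - (i : ℤ)) * (((2 * n : ℕ) : ℤ) - (i : ℤ)) - 4 * (n : ℤ) ^ 2
        + ekE (2 * n) i (i - p)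
      = ((n : ℤ) + 1) * ((i : ℤ) - (p : ℤ))
          + (3 * (n : ℤ) - (i : ℤ) + 1) * ((n : ℤ) - (i : ℤ)) / 2
          - 4 * (n : ℤ) ^ 2 + ((Tn (n - p) : ℕ) : ℤ) := by
  have h2T : ∀ k : ℕ, 2 * ((Tn k : ℕ) : ℤ) = (k : ℤ) * ((k : ℤ) - 1) := by
    intro k
    have h := Tn_two_mul k
    cases k with
    | zero => simp [Tn]
    | succ k =>
      have h' : 2 * Tn (k + 1) = (k + 1) * k := by rw [h, Nat.add_sub_cancel]
      have := congrArg (Nat.cast : ℕ → ℤ) h'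
      push_cast at this ⊢
      linarith [this]
  have hdvd : (2 : ℤ) ∣ (3 * (n : ℤ) - (i : ℤ) + 1) * ((n : ℤ) - (i : ℤ)) := by
    have hsplit : (3 * (n : ℤ) - (i : ℤ) + 1) * ((n : ℤ) - (i : ℤ))
        = ((n : ℤ) - i) * (((n : ℤ) - i) + 1) + 2 * ((n : ℤ) * ((n : ℤ) - i)) := by ring
    rw [hsplit]
    exact dvd_add (Int.even_mul_succ_self _).two_dvd ⟨(n : ℤ) * ((n : ℤ) - i), rfl⟩
  obtain ⟨c, hc⟩ := hdvd
  have hdiv : (3 * (n : ℤ) - (i : ℤ) + 1) * ((n : ℤ) - (i : ℤ)) / 2 = c := by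
    rw [hc]; exact Int.mul_ediv_cancel_left c two_ne_zero
  rw [hdiv, ekE, show i - (i - p) = p from by omega]
  have hip : ((i - p : ℕ) : ℤ) = (i : ℤ) - (p : ℤ) := by omega
  rw [hip]
  have e1 := h2T p
  have e2 := h2T i
  have e3 := h2T (n - p)
  have hnp : ((n - p : ℕ) : ℤ) = (n : ℤ) - (p : ℤ) := by omega
  rw [hnp] at e3
  refine mul_left_cancel₀ (by norm_num : (2 : ℤ) ≠ 0) ?_
  push_cast
  linear_combination e1 - e2 - e3 + hc

lemma pow_prod_Tn (hq : 1 < q) : ∀ m : ℕ,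
    ∏ j ∈ Icc 1 m, (-q) ^ ((j : ℤ) - 1) = (-q) ^ ((Tn m : ℕ) : ℤ) := by
  intro m
  induction m with
  | zero => simp [Tn]
  | succ m ih =>
    rw [Finset.prod_Icc_succ_top (by omega) (fun j : ℕ => (-q) ^ ((j : ℤ) - 1)), ih,
      ← zpow_add₀ (hx0 hq)]
    congr 1
    rw [Tn_succ]
    push_cast
    ring

lemma num_transform (hq : 1 < q) {n p : ℕ} (hp : p ≤ n) :
    ∏ j ∈ Icc 1 (n - p), ((-q) ^ (n : ℤ) - (-q) ^ ((j : ℤ) - 1))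
      = (-q) ^ ((Tn (n - p) : ℕ) : ℤ) * ∏ j ∈ Icc (p + 1) n, ((-q) ^ j - 1) := by
  have hx : (-q) ≠ 0 := hx0 hq
  have hterm : ∀ j ∈ Icc 1 (n - p), (-q) ^ (n : ℤ) - (-q) ^ ((j : ℤ) - 1)
      = (-q) ^ ((j : ℤ) - 1) * ((-q) ^ ((n : ℤ) - (j : ℤ) + 1) - 1) := by
    intro j hj
    rw [mul_sub, mul_one, ← zpow_add₀ hx]
    congr 2
    ring
  rw [Finset.prod_congr rfl hterm, Finset.prod_mul_distrib, pow_prod_Tn hq]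
  congr 1
  refine Finset.prod_nbij' (fun j => n + 1 - j) (fun m => n + 1 - m) ?_ ?_ ?_ ?_ ?_
  · intro a ha
    simp only [Finset.mem_Icc] at ha ⊢
    omega
  · intro a ha
    simp only [Finset.mem_Icc] at ha ⊢
    omega
  · intro a ha
    simp only [Finset.mem_Icc] at ha ⊢
    omega
  · intro a ha
    simp only [Finset.mem_Icc] at ha ⊢
    omega
  · intro a ha
    simp only [Finset.mem_Icc] at ha
    have hcast : ((n + 1 - a : ℕ) : ℤ) = (n : ℤ) - (a : ℤ) + 1 := by omega
    rw [← zpow_natCast (-q) (n + 1 - a), hcast]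

lemma Icc_one_Ioc (b : ℕ) : Icc 1 b = Ioc 0 b := by exact Finset.Icc_add_one_left_eq_Ioc 0 b

lemma qB_prod_ratio (hq : 1 < q) {n i p : ℕ} (h1 : 1 ≤ i) (h2 : i ≤ n) (h3 : p ≤ i) :
    qB (-q) n i * qB (-q) i (i - p)
      = (∏ j ∈ Icc (p + 1) n, ((-q) ^ j - 1))
        / ((∏ j ∈ Icc 1 (i - p), ((-q) ^ j - 1)) * (∏ j ∈ Icc 1 (n - i), ((-q) ^ j - 1))) := by
  have hx1 := pow_ne_one' hq
  rw [qB_closed (-q) hx1 n i h2, qB_closed (-q) hx1 i (i - p) (by omega),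
    show i - (i - p) + 1 = p + 1 from by omega]
  have d1 : ∏ j ∈ Icc 1 i, ((-q) ^ j - 1) ≠ 0 := prod_Icc_ne_zero (-q) hx1 1 i le_rfl
  have d2 : ∏ j ∈ Icc 1 (i - p), ((-q) ^ j - 1) ≠ 0 := prod_Icc_ne_zero (-q) hx1 1 _ le_rfl
  have d3 : ∏ j ∈ Icc 1 (n - i), ((-q) ^ j - 1) ≠ 0 := prod_Icc_ne_zero (-q) hx1 1 _ le_rfl
  have key : (∏ j ∈ Icc (n - i + 1) n, ((-q) ^ j - 1)) * (∏ j ∈ Icc (p + 1) i, ((-q) ^ j - 1))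
        * (∏ j ∈ Icc 1 (n - i), ((-q) ^ j - 1))
      = (∏ j ∈ Icc (p + 1) n, ((-q) ^ j - 1)) * (∏ j ∈ Icc 1 i, ((-q) ^ j - 1)) := by
    rw [Icc_one_Ioc, Icc_one_Ioc, Finset.Icc_add_one_left_eq_Ioc, Finset.Icc_add_one_left_eq_Ioc, Finset.Icc_add_one_left_eq_Ioc]
    have e1 : (∏ j ∈ Ioc 0 (n - i), ((-q) ^ j - 1)) * (∏ j ∈ Ioc (n - i) n, ((-q) ^ j - 1))
        = ∏ j ∈ Ioc 0 n, ((-q) ^ j - 1) :=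
      Finset.prod_Ioc_consecutive _ (by omega) (by omega)
    have e2 : (∏ j ∈ Ioc 0 i, ((-q) ^ j - 1)) * (∏ j ∈ Ioc i n, ((-q) ^ j - 1))
        = ∏ j ∈ Ioc 0 n, ((-q) ^ j - 1) :=
      Finset.prod_Ioc_consecutive _ (by omega) (by omega)
    have e3 : (∏ j ∈ Ioc p i, ((-q) ^ j - 1)) * (∏ j ∈ Ioc i n, ((-q) ^ j - 1))
        = ∏ j ∈ Ioc p n, ((-q) ^ j - 1) :=
      Finset.prod_Ioc_consecutive _ (by omega) (by omega)
    calc (∏ j ∈ Ioc (n - i) n, ((-q) ^ j - 1)) * (∏ j ∈ Ioc p i, ((-q) ^ j - 1))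
          * (∏ j ∈ Ioc 0 (n - i), ((-q) ^ j - 1))
        = (∏ j ∈ Ioc p i, ((-q) ^ j - 1))
            * ((∏ j ∈ Ioc 0 (n - i), ((-q) ^ j - 1))
              * (∏ j ∈ Ioc (n - i) n, ((-q) ^ j - 1))) := by ring
      _ = (∏ j ∈ Ioc p i, ((-q) ^ j - 1)) * (∏ j ∈ Ioc 0 n, ((-q) ^ j - 1)) := by rw [e1]
      _ = (∏ j ∈ Ioc p i, ((-q) ^ j - 1))
            * ((∏ j ∈ Ioc 0 i, ((-q) ^ j - 1)) * (∏ j ∈ Ioc i n, ((-q) ^ j - 1))) := by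
          rw [e2]
      _ = ((∏ j ∈ Ioc p i, ((-q) ^ j - 1)) * (∏ j ∈ Ioc i n, ((-q) ^ j - 1)))
            * (∏ j ∈ Ioc 0 i, ((-q) ^ j - 1)) := by ring
      _ = (∏ j ∈ Ioc p n, ((-q) ^ j - 1)) * (∏ j ∈ Ioc 0 i, ((-q) ^ j - 1)) := by rw [e3]
  rw [div_mul_div_comm, div_eq_div_iff (mul_ne_zero d1 d2) (mul_ne_zero d2 d3)]
  linear_combination (∏ j ∈ Icc 1 (i - p), ((-q) ^ j - 1)) * key

lemma cancel_helper (a b c e f w' : ℝ) (hw : w' ≠ 0) :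
    (a * b * w') * (c * e * f / w') = c * (a * e) * (b * f) := by
  field_simp

end Main

theorem stmt11 (q : ℝ) (hq : 1 < q) (n : ℕ) (hn : 1 ≤ n)
    (d : ℕ → ℕ → ℝ)
    (hd : ∀ l, l ≤ 2 * n →
      (Mmat q n l).mulVec (fun i => d (i : ℕ) l) = Pi.single (Fin.last l) 1)
    (Δ : Matrix (Fin (2 * n + 1)) (Fin (2 * n + 1)) ℝ)
    (hΔ : ∀ i l : Fin (2 * n + 1),
      Δ i l = if (i : ℕ) ≤ (l : ℕ) then d (i : ℕ) (l : ℕ) else 0)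
    (v : Fin (2 * n + 1) → ℝ)
    (hv : ∀ k : Fin (2 * n + 1), v k =
      if (k : ℕ) = 0 then 0
      else (-q) ^ ((n : ℤ) * (2 * (n : ℤ) - ((k : ℕ) : ℤ)) - 4 * (n : ℤ) ^ 2)
        - (-q) ^ (-2 * (n : ℤ) ^ 2))
    (K : Fin (2 * n + 1) → ℝ)
    (hK : (Mmat q n (2 * n) * Δ).mulVec K = v) :
    ∀ i p : ℕ, ∀ h1 : 1 ≤ i, ∀ h2 : i ≤ n, ∀ h3 : p ≤ i,
      (2 : ℤ) ∣ (3 * (n : ℤ) - (i : ℤ) + 1) * ((n : ℤ) - (i : ℤ)) ∧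
      K ⟨i, by omega⟩ * d p i =
        (-1 : ℝ) ^ (i - p) *
          (-q) ^ (((n : ℤ) + 1) * ((i : ℤ) - (p : ℤ))
            + (3 * (n : ℤ) - (i : ℤ) + 1) * ((n : ℤ) - (i : ℤ)) / 2
            - 4 * (n : ℤ) ^ 2) *
          ((∏ j ∈ Finset.Icc 1 (n - p), ((-q) ^ (n : ℤ) - (-q) ^ ((j : ℤ) - 1))) /
            ((∏ j ∈ Finset.Icc 1 (i - p), ((-q) ^ (j : ℤ) - 1)) *
              (∏ j ∈ Finset.Icc 1 (n - i), ((-q) ^ (j : ℤ) - 1)))) := by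
  intro i p h1 h2 h3
  have hx : (-q) ≠ 0 := hx0 hq
  constructor
  · have hsplit : (3 * (n : ℤ) - (i : ℤ) + 1) * ((n : ℤ) - (i : ℤ))
        = ((n : ℤ) - i) * (((n : ℤ) - i) + 1) + 2 * ((n : ℤ) * ((n : ℤ) - i)) := by ring
    rw [hsplit]
    exact dvd_add (Int.even_mul_succ_self _).two_dvd ⟨(n : ℤ) * ((n : ℤ) - i), rfl⟩
  · have hKi := K_eq_Kstar hq hn d hd Δ hΔ v hv K hK i h2
    rw [hKi, d_eq_dstar hq n d hd (show i ≤ 2 * n by omega) h3]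
    rw [Kstar, if_neg (by omega), dstar]
    -- convert the zpow products in the target to nat-pow products
    have hconv : ∀ m : ℕ, (∏ j ∈ Finset.Icc 1 m, ((-q) ^ (j : ℤ) - 1))
        = ∏ j ∈ Finset.Icc 1 m, ((-q) ^ j - 1) :=
      fun m => Finset.prod_congr rfl fun j _ => by rw [zpow_natCast]
    rw [hconv, hconv, num_transform hq (le_trans h3 h2)]
    rw [cancel_helper _ _ _ _ _ _ (wprod_ne_zero hq n i)]
    have hexp : (-q) ^ (((n : ℤ) - (i : ℤ)) * (((2 * n : ℕ) : ℤ) - (i : ℤ)) - 4 * (n : ℤ) ^ 2)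
          * (-q) ^ ekE (2 * n) i (i - p)
        = (-q) ^ (((n : ℤ) + 1) * ((i : ℤ) - (p : ℤ))
            + (3 * (n : ℤ) - (i : ℤ) + 1) * ((n : ℤ) - (i : ℤ)) / 2
            - 4 * (n : ℤ) ^ 2)
          * (-q) ^ ((Tn (n - p) : ℕ) : ℤ) := by
      rw [← zpow_add₀ hx, ← zpow_add₀ hx, exp_identity h1 h2 h3]
    rw [hexp, qB_prod_ratio hq h1 h2 h3]
    ring
end

section
/- Let q > 1 be a real number. Then for every integer e, min(0, e) · (-q)^{min(0, e)} = -(1/(q+1)) · (-q)^{min(0, e)} + ∑_{k=1}^{∞} (-1)^{k+1} q^{-k} (-q)^{min(0, e+k)}, where the series on the right converges absolutely. -/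
/- The rank-one expansion (equation (4.1.3) of the paper, the n = 1 unitary Cho–Yamauchi
formula): min(0,e)·(-q)^{min(0,e)} = -(1/(q+1))·(-q)^{min(0,e)}
+ ∑_{k=1}^∞ (-1)^{k+1} q^{-k} (-q)^{min(0,e+k)}. -/

theorem stmt14 (q : ℝ) (hq : 1 < q) (e : ℤ) :
    Summable (fun k : ℕ =>
      |(-1 : ℝ) ^ ((k + 1) + 1) * q ^ (-((k : ℤ) + 1)) * (-q) ^ (min 0 (e + ((k : ℤ) + 1)))|) ∧
    ((min 0 e : ℤ) : ℝ) * (-q) ^ (min 0 e) =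
      -(1 / (q + 1)) * (-q) ^ (min 0 e) +
        ∑' k : ℕ,
          (-1 : ℝ) ^ ((k + 1) + 1) * q ^ (-((k : ℤ) + 1)) * (-q) ^ (min 0 (e + ((k : ℤ) + 1))) := by
  have hq0 : (0:ℝ) < q := lt_trans one_pos hq
  have hqne : q ≠ 0 := ne_of_gt hq0
  set f : ℕ → ℝ := fun k => (-1:ℝ)^((k+1)+1) * q ^ (-((k:ℤ)+1)) * (-q) ^ (min 0 (e + ((k:ℤ)+1))) with hfdef
  have habsz : ∀ m : ℤ, |(-q) ^ m| = q ^ m := fun m => by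
    rw [← Real.norm_eq_abs, norm_zpow, norm_neg, Real.norm_eq_abs, abs_of_pos hq0]
  have habsq : ∀ m : ℤ, |q ^ m| = q ^ m := fun m => abs_of_pos (zpow_pos hq0 m)
  -- absolute value bound
  have hfabs : ∀ k, |f k| ≤ (q⁻¹)^(k+1) := by
    intro k
    have h1 : |f k| = q ^ (-((k:ℤ)+1)) * q ^ (min 0 (e + ((k:ℤ)+1))) := by
      simp only [hfdef, abs_mul, abs_pow, abs_neg, abs_one, one_pow, one_mul, habsz, habsq]
    have h2 : q ^ (min 0 (e + ((k:ℤ)+1))) ≤ 1 := by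
      have : q ^ (min 0 (e + ((k:ℤ)+1))) ≤ q ^ (0:ℤ) :=
        zpow_le_zpow_right₀ (le_of_lt hq) (min_le_left _ _)
      simpa using this
    have h3 : q ^ (-((k:ℤ)+1)) = (q⁻¹)^(k+1) := by
      rw [zpow_neg, ← zpow_natCast, ← inv_zpow]
      norm_num
    rw [h1, h3]
    nlinarith [pow_pos (inv_pos.mpr hq0) (k+1), h2, pow_nonneg (le_of_lt (inv_pos.mpr hq0)) (k+1)]
  have habs : Summable (fun k => |f k|) := by
    apply Summable.of_nonneg_of_le (fun k => abs_nonneg _) hfabs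
    have : Summable (fun k : ℕ => (q⁻¹)^k) :=
      summable_geometric_of_lt_one (by positivity) (inv_lt_one_of_one_lt₀ hq)
    exact (this.comp_injective (add_left_injective 1)).congr (by intro k; simp [pow_succ]; ring)
  refine ⟨habs, ?_⟩
  have hsf : Summable f := habs.of_abs
  set m : ℤ := min 0 e with hm
  have hm0 : m ≤ 0 := min_le_left _ _
  have hme : m ≤ e := min_le_right _ _
  set n : ℕ := (-m).toNat with hn
  have hmn : m = -(n:ℤ) := by rw [hn]; omega
  have hone : (-1:ℝ) ≠ 0 := by norm_num
  have hneo : ∀ s t : ℤ, s % 2 = t % 2 → (-1:ℝ) ^ s = (-1:ℝ) ^ t := by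
    intro s t hst
    rcases Int.even_or_odd s with hs | hs
    · have ht : Even t := by rw [Int.even_iff] at hs ⊢; omega
      rw [hs.neg_one_zpow, ht.neg_one_zpow]
    · have ht : Odd t := by rw [Int.odd_iff] at hs ⊢; omega
      rw [hs.neg_one_zpow, ht.neg_one_zpow]
  have hhead : ∀ k < n, f k = (-1:ℝ) ^ (n+1) * q ^ (-(n:ℤ)) := by
    intro k hk
    have hen : e = -(n:ℤ) := by omega
    have hmin : min 0 (e + ((k:ℤ)+1)) = e + ((k:ℤ)+1) := min_eq_right (by omega)
    rw [hfdef]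
    simp only [hmin]
    rw [show (-q) = (-1)*q from by ring, mul_zpow, ← zpow_natCast (-1:ℝ) (k+1+1), ← zpow_natCast (-1:ℝ) (n+1)]
    rw [show ((-1:ℝ))^(((k+1+1:ℕ)):ℤ) * q ^ (-((k:ℤ)+1)) * ((-1:ℝ)^(e+((k:ℤ)+1)) * q ^ (e+((k:ℤ)+1)))
        = ((-1:ℝ)^(((k+1+1:ℕ)):ℤ) * (-1:ℝ)^(e+((k:ℤ)+1))) * (q ^ (-((k:ℤ)+1)) * q ^ (e+((k:ℤ)+1))) from by ring]
    rw [← zpow_add₀ hone, ← zpow_add₀ hqne]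
    rw [show (-((k:ℤ)+1) + (e+((k:ℤ)+1))) = e from by ring, hen]
    congr 1
    apply hneo
    push_cast
    omega
  have htail : ∀ k : ℕ, f (k + n) = ((-1:ℝ)^n * (q⁻¹)^(n+1)) * (-q⁻¹)^k := by
    intro k
    have hmin : min 0 (e + (((k+n:ℕ):ℤ)+1)) = 0 := min_eq_left (by push_cast; omega)
    rw [hfdef]
    simp only [hmin, zpow_zero, mul_one]
    rw [show (-((((k+n:ℕ)):ℤ)+1)) = -(((k+n+1:ℕ)):ℤ) from by push_cast; ring]
    rw [zpow_neg, zpow_natCast, ← inv_pow]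
    rw [neg_pow (q⁻¹) k]
    ring
  have hgeo : ∑' k : ℕ, (-q⁻¹ : ℝ)^k = (1 + q⁻¹)⁻¹ := by
    rw [tsum_geometric_of_norm_lt_one (by
      rw [norm_neg, Real.norm_eq_abs, abs_of_pos (inv_pos.mpr hq0)]
      exact inv_lt_one_of_one_lt₀ hq)]
    ring_nf
  have hsplit := Summable.sum_add_tsum_nat_add n hsf
  have hheadsum : ∑ i ∈ Finset.range n, f i = (n:ℝ) * ((-1:ℝ)^(n+1) * q ^ (-(n:ℤ))) := by
    rw [Finset.sum_congr rfl (fun i hi => hhead i (Finset.mem_range.mp hi))]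
    rw [Finset.sum_const, Finset.card_range, nsmul_eq_mul]
  have htailsum : ∑' k : ℕ, f (k + n) = ((-1:ℝ)^n * (q⁻¹)^(n+1)) * (1+q⁻¹)⁻¹ := by
    simp only [htail]
    rw [tsum_mul_left, hgeo]
  rw [← hsplit, hheadsum, htailsum, hmn]
  rw [zpow_neg, zpow_neg, zpow_natCast, zpow_natCast, neg_pow q n, pow_succ (-1:ℝ) n,
    pow_succ (q⁻¹) n, inv_pow]
  have hP : ((-1:ℝ))^n * ((-1:ℝ))^n = 1 := by
    rw [← pow_add, ← two_mul, pow_mul]; norm_num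
  have hQ : (q:ℝ)^n ≠ 0 := pow_ne_zero _ hqne
  have hq1 : q + 1 ≠ 0 := by positivity
  generalize hPg : ((-1:ℝ))^n = P at hP ⊢
  generalize hQg : (q:ℝ)^n = Q at hQ ⊢
  have hPne : P ≠ 0 := by intro h; rw [h] at hP; simp at hP
  push_cast
  field_simp
  linear_combination (P*Q^3*q*(q+1)*((n:ℝ)*(q+1)-1) + ((n:ℝ)*q + n - 1) - P*Q^3*((n:ℝ)*q + 2*n*q^2 + n*q^3 - q - q^2)) * hP
end
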